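/- Under the elementwise interpolation estimates ‖v−I_h v‖_{L²(K)} ≤ C₀ h_K^{k+1}|v|_{H^{k+1}(K)}, ‖∇(v−I_h v)‖ ≤ C₁ h_K^k |v|_{H^{k+1}(K)}, ‖∂ₜ(v−I_h v)‖ ≤ C₁ h_K^k|v|_{H^{k+1}(K)}, ‖Δ(v−I_h v)‖ ≤ C₂ h_K^{k−1}|v|_{H^{k+1}(K)}, the boundary estimate ‖v−I_h v‖_{L²(∂K)} ≤ C_Γ h_K^{k+1/2}|v|_{H^{k+1}(K)}, and stabilization ε_K = h_K²/(c₁‖ã‖_K h_K + c₂ν), the interpolation error measured in the discrete norm satisfies ‖I_h u − u‖_{V_h} ≤ C h^k |u|_{H^{k+1}(Ω)}. -/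

import Mathlib

set_option maxHeartbeats 1000000


/-- under the elementwise interpolation estimates (for the `L²` norm, the
gradient, the time derivative, the Laplacian and the final-time boundary trace) and with
stabilization `ε_K = h_K²/(c₁‖ã‖_K h_K + c₂ν)`, the interpolation error measured in the
discrete norm `‖w‖²_{V_h} = ‖w‖²_{Γ_T} + ν‖∇w‖² + Σ_K ε_K‖∂ₜw + a·∇w − νΔw‖²_K`
satisfies `‖I_h u − u‖_{V_h} ≤ C h^k |u|_{H^{k+1}(Ω)}`, with `C` independent of `h` and `u`. -/
theorem interp_estimate_discrete_norm
    (V : Type*) [AddCommGroup V]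
    (C₀ C₁ C₂ CΓ c₁ c₂ ν γB H : ℝ)
    (hC₀ : 0 < C₀) (hC₁ : 0 < C₁) (hC₂ : 0 < C₂) (hCΓ : 0 < CΓ)
    (hc₁ : 0 < c₁) (hc₂ : 0 < c₂) (hν : 0 < ν) (hγB : 0 < γB) (hH : 0 < H) :
    ∃ C : ℝ, 0 < C ∧
      ∀ (ι : Type) (mesh : Finset ι) (hK aK : ι → ℝ) (h : ℝ) (k : ℕ)
        (Ih : V → V) (u : V)
        (nGammaT : V → ℝ) (nGrad nDt nLap nM : ι → V → ℝ)
        (semK : ι → ℝ) (semΩ : ℝ),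
        1 ≤ k → 0 < h → h ≤ H →
        (∀ K ∈ mesh, 0 < hK K ∧ hK K ≤ h) →
        (∀ K ∈ mesh, 0 ≤ aK K ∧ aK K * hK K + ν ≤ γB) →
        (0 ≤ nGammaT (u - Ih u)) →
        (∀ K ∈ mesh, 0 ≤ nGrad K (u - Ih u) ∧ 0 ≤ nDt K (u - Ih u) ∧
          0 ≤ nLap K (u - Ih u) ∧ 0 ≤ nM K (u - Ih u) ∧ 0 ≤ semK K) →
        -- triangle inequality for the space-time operator `M = ∂ₜ + a·∇ − νΔ`
        (∀ K ∈ mesh, nM K (u - Ih u)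
          ≤ nDt K (u - Ih u) + aK K * nGrad K (u - Ih u) + ν * nLap K (u - Ih u)) →
        -- elementwise interpolation estimates
        (∀ K ∈ mesh, nDt K (u - Ih u) ≤ C₁ * hK K ^ k * semK K) →
        (∀ K ∈ mesh, nGrad K (u - Ih u) ≤ C₁ * hK K ^ k * semK K) →
        (∀ K ∈ mesh, nLap K (u - Ih u) ≤ C₂ * hK K ^ (k - 1) * semK K) →
        -- boundary trace estimate on `Γ_T`
        (nGammaT (u - Ih u) ≤ CΓ * h ^ ((k : ℝ) + 1 / 2) * semΩ) →
        -- the local seminorms add up to the global `H^{k+1}` seminorm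
        (∑ K ∈ mesh, (semK K) ^ 2 ≤ semΩ ^ 2) → 0 ≤ semΩ →
        Real.sqrt ((nGammaT (u - Ih u)) ^ 2
            + ν * ∑ K ∈ mesh, (nGrad K (u - Ih u)) ^ 2
            + ∑ K ∈ mesh, (hK K ^ 2 / (c₁ * aK K * hK K + c₂ * ν))
                * (nM K (u - Ih u)) ^ 2)
          ≤ C * h ^ k * semΩ := by
  set D := C₁ * H + C₁ * γB + C₂ * γB with hD
  have hDpos : 0 < D := by positivity
  set S := CΓ ^ 2 * H + ν * C₁ ^ 2 + D ^ 2 / (c₂ * ν) with hS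
  have hSpos : 0 < S := by positivity
  refine ⟨Real.sqrt S, Real.sqrt_pos.mpr hSpos, ?_⟩
  intro ι mesh hK aK h k Ih u nGammaT nGrad nDt nLap nM semK semΩ
    hk hh hhH hmesh haK hGT0 hnn htri hDt hGrad hLap hGT hsum hsemΩ
  have h0 : (0:ℝ) ≤ h := hh.le
  have hk1 : k - 1 + 1 = k := Nat.succ_pred_eq_of_pos hk
  -- boundary term
  have hrp : (h ^ ((k:ℝ) + 1/2)) ^ 2 = h ^ (2*k) * h := by
    rw [← Real.rpow_natCast (h ^ ((k:ℝ) + 1/2)) 2, ← Real.rpow_mul h0,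
      show ((k:ℝ) + 1/2) * (2:ℕ) = ((2*k : ℕ) : ℝ) + 1 by push_cast; ring,
      Real.rpow_add hh, Real.rpow_natCast, Real.rpow_one]
  have hGT2 : (nGammaT (u - Ih u)) ^ 2 ≤ CΓ ^ 2 * H * (h ^ (2*k) * semΩ ^ 2) := by
    have h1 : (nGammaT (u - Ih u)) ^ 2 ≤ (CΓ * h ^ ((k:ℝ) + 1/2) * semΩ) ^ 2 :=
      pow_le_pow_left₀ hGT0 hGT 2
    have h2 : (CΓ * h ^ ((k:ℝ) + 1/2) * semΩ) ^ 2
        = CΓ ^ 2 * (h ^ (2*k) * h) * semΩ ^ 2 := by rw [← hrp]; ring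
    have h3 : CΓ ^ 2 * (h ^ (2*k) * h) * semΩ ^ 2
        ≤ CΓ ^ 2 * (h ^ (2*k) * H) * semΩ ^ 2 := by
      have : h ^ (2*k) * h ≤ h ^ (2*k) * H :=
        mul_le_mul_of_nonneg_left hhH (by positivity)
      nlinarith [sq_nonneg semΩ, sq_nonneg CΓ]
    calc (nGammaT (u - Ih u)) ^ 2 ≤ CΓ ^ 2 * (h ^ (2*k) * h) * semΩ ^ 2 := by
          rw [← h2]; exact h1
      _ ≤ CΓ ^ 2 * (h ^ (2*k) * H) * semΩ ^ 2 := h3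
      _ = CΓ ^ 2 * H * (h ^ (2*k) * semΩ ^ 2) := by ring
  -- gradient term
  have hgradK : ∀ K ∈ mesh, (nGrad K (u - Ih u)) ^ 2
      ≤ C₁ ^ 2 * h ^ (2*k) * (semK K) ^ 2 := by
    intro K hKm
    obtain ⟨hg0, _, _, _, hsK0⟩ := hnn K hKm
    obtain ⟨hk0, hkh⟩ := hmesh K hKm
    have h1 : (nGrad K (u - Ih u)) ^ 2 ≤ (C₁ * hK K ^ k * semK K) ^ 2 :=
      pow_le_pow_left₀ hg0 (hGrad K hKm) 2
    have h2 : hK K ^ k ≤ h ^ k := pow_le_pow_left₀ hk0.le hkh k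
    have h3 : (C₁ * hK K ^ k * semK K) ^ 2 ≤ (C₁ * h ^ k * semK K) ^ 2 := by
      have hb : 0 ≤ C₁ * hK K ^ k * semK K := by positivity
      have : C₁ * hK K ^ k * semK K ≤ C₁ * h ^ k * semK K := by
        have := mul_le_mul_of_nonneg_left h2 hC₁.le
        exact mul_le_mul_of_nonneg_right this hsK0
      exact pow_le_pow_left₀ hb this 2
    calc (nGrad K (u - Ih u)) ^ 2 ≤ (C₁ * h ^ k * semK K) ^ 2 := h1.trans h3
      _ = C₁ ^ 2 * h ^ (2*k) * (semK K) ^ 2 := by rw [two_mul, pow_add]; ring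
  have hgradsum : ν * ∑ K ∈ mesh, (nGrad K (u - Ih u)) ^ 2
      ≤ ν * C₁ ^ 2 * (h ^ (2*k) * semΩ ^ 2) := by
    have h1 : ∑ K ∈ mesh, (nGrad K (u - Ih u)) ^ 2
        ≤ ∑ K ∈ mesh, C₁ ^ 2 * h ^ (2*k) * (semK K) ^ 2 :=
      Finset.sum_le_sum hgradK
    rw [← Finset.mul_sum] at h1
    have h2 : C₁ ^ 2 * h ^ (2*k) * ∑ K ∈ mesh, (semK K) ^ 2
        ≤ C₁ ^ 2 * h ^ (2*k) * semΩ ^ 2 :=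
      mul_le_mul_of_nonneg_left hsum (by positivity)
    have := mul_le_mul_of_nonneg_left (h1.trans h2) hν.le
    calc ν * ∑ K ∈ mesh, (nGrad K (u - Ih u)) ^ 2
        ≤ ν * (C₁ ^ 2 * h ^ (2*k) * semΩ ^ 2) := this
      _ = ν * C₁ ^ 2 * (h ^ (2*k) * semΩ ^ 2) := by ring
  -- stabilized term
  have hMK : ∀ K ∈ mesh, (hK K ^ 2 / (c₁ * aK K * hK K + c₂ * ν))
      * (nM K (u - Ih u)) ^ 2
      ≤ D ^ 2 / (c₂ * ν) * h ^ (2*k) * (semK K) ^ 2 := by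
    intro K hKm
    obtain ⟨_, _, _, hM0, hsK0⟩ := hnn K hKm
    obtain ⟨hk0, hkh⟩ := hmesh K hKm
    obtain ⟨ha0, haB⟩ := haK K hKm
    have haKhK : aK K * hK K ≤ γB := by linarith
    have hνB : ν ≤ γB := by
      have := mul_nonneg ha0 hk0.le; linarith
    -- bound nM
    have hMle : nM K (u - Ih u) ≤ D * hK K ^ (k-1) * semK K := by
      have hDt' := hDt K hKm
      have hGrad' := hGrad K hKm
      have hLap' := hLap K hKm
      have htri' := htri K hKm
      have hpow : hK K ^ k = hK K ^ (k-1) * hK K := by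
        rw [← pow_succ, hk1]
      have hkH : hK K ≤ H := hkh.trans hhH
      have hp0 : (0:ℝ) ≤ hK K ^ (k-1) := by positivity
      have b1 : nDt K (u - Ih u) ≤ C₁ * H * (hK K ^ (k-1) * semK K) := by
        calc nDt K (u - Ih u) ≤ C₁ * hK K ^ k * semK K := hDt'
          _ = C₁ * hK K * (hK K ^ (k-1) * semK K) := by rw [hpow]; ring
          _ ≤ C₁ * H * (hK K ^ (k-1) * semK K) := by
              have : C₁ * hK K ≤ C₁ * H := mul_le_mul_of_nonneg_left hkH hC₁.le
              exact mul_le_mul_of_nonneg_right this (by positivity)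
      have b2 : aK K * nGrad K (u - Ih u) ≤ C₁ * γB * (hK K ^ (k-1) * semK K) := by
        calc aK K * nGrad K (u - Ih u) ≤ aK K * (C₁ * hK K ^ k * semK K) :=
              mul_le_mul_of_nonneg_left hGrad' ha0
          _ = C₁ * (aK K * hK K) * (hK K ^ (k-1) * semK K) := by rw [hpow]; ring
          _ ≤ C₁ * γB * (hK K ^ (k-1) * semK K) := by
              have : C₁ * (aK K * hK K) ≤ C₁ * γB :=
                mul_le_mul_of_nonneg_left haKhK hC₁.le
              exact mul_le_mul_of_nonneg_right this (by positivity)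
      have b3 : ν * nLap K (u - Ih u) ≤ C₂ * γB * (hK K ^ (k-1) * semK K) := by
        calc ν * nLap K (u - Ih u) ≤ ν * (C₂ * hK K ^ (k-1) * semK K) :=
              mul_le_mul_of_nonneg_left hLap' hν.le
          _ = C₂ * ν * (hK K ^ (k-1) * semK K) := by ring
          _ ≤ C₂ * γB * (hK K ^ (k-1) * semK K) := by
              have : C₂ * ν ≤ C₂ * γB := mul_le_mul_of_nonneg_left hνB hC₂.le
              exact mul_le_mul_of_nonneg_right this (by positivity)
      calc nM K (u - Ih u)
          ≤ nDt K (u - Ih u) + aK K * nGrad K (u - Ih u) + ν * nLap K (u - Ih u) := htri'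
        _ ≤ C₁ * H * (hK K ^ (k-1) * semK K) + C₁ * γB * (hK K ^ (k-1) * semK K)
            + C₂ * γB * (hK K ^ (k-1) * semK K) := add_le_add (add_le_add b1 b2) b3
        _ = D * hK K ^ (k-1) * semK K := by rw [hD]; ring
    -- bound ε
    have hden : c₂ * ν ≤ c₁ * aK K * hK K + c₂ * ν :=
      le_add_of_nonneg_left (by positivity)
    have hεle : hK K ^ 2 / (c₁ * aK K * hK K + c₂ * ν) ≤ hK K ^ 2 / (c₂ * ν) :=
      div_le_div_of_nonneg_left (by positivity) (by positivity) hden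
    have hε0 : 0 ≤ hK K ^ 2 / (c₁ * aK K * hK K + c₂ * ν) := by positivity
    have hM2 : (nM K (u - Ih u)) ^ 2 ≤ (D * hK K ^ (k-1) * semK K) ^ 2 :=
      pow_le_pow_left₀ hM0 hMle 2
    have hhk2k : hK K ^ 2 * (hK K ^ (k-1)) ^ 2 = hK K ^ (2*k) := by
      rw [← pow_mul, ← pow_add,
        show 2 + (k-1)*2 = 2*k by omega]
    calc (hK K ^ 2 / (c₁ * aK K * hK K + c₂ * ν)) * (nM K (u - Ih u)) ^ 2
        ≤ (hK K ^ 2 / (c₂ * ν)) * (D * hK K ^ (k-1) * semK K) ^ 2 := by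
          apply mul_le_mul hεle hM2 (by positivity) (by positivity)
      _ = D ^ 2 / (c₂ * ν) * (hK K ^ 2 * (hK K ^ (k-1)) ^ 2) * (semK K) ^ 2 := by
          field_simp
      _ = D ^ 2 / (c₂ * ν) * hK K ^ (2*k) * (semK K) ^ 2 := by rw [hhk2k]
      _ ≤ D ^ 2 / (c₂ * ν) * h ^ (2*k) * (semK K) ^ 2 := by
          have : hK K ^ (2*k) ≤ h ^ (2*k) := pow_le_pow_left₀ hk0.le hkh (2*k)
          have h1 : D ^ 2 / (c₂ * ν) * hK K ^ (2*k) ≤ D ^ 2 / (c₂ * ν) * h ^ (2*k) :=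
            mul_le_mul_of_nonneg_left this (by positivity)
          exact mul_le_mul_of_nonneg_right h1 (by positivity)
  have hMsum : ∑ K ∈ mesh, (hK K ^ 2 / (c₁ * aK K * hK K + c₂ * ν))
      * (nM K (u - Ih u)) ^ 2
      ≤ D ^ 2 / (c₂ * ν) * (h ^ (2*k) * semΩ ^ 2) := by
    have h1 := Finset.sum_le_sum hMK
    rw [← Finset.mul_sum] at h1
    have h2 : D ^ 2 / (c₂ * ν) * h ^ (2*k) * ∑ K ∈ mesh, (semK K) ^ 2
        ≤ D ^ 2 / (c₂ * ν) * h ^ (2*k) * semΩ ^ 2 :=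
      mul_le_mul_of_nonneg_left hsum (by positivity)
    calc _ ≤ D ^ 2 / (c₂ * ν) * h ^ (2*k) * semΩ ^ 2 := h1.trans h2
      _ = D ^ 2 / (c₂ * ν) * (h ^ (2*k) * semΩ ^ 2) := by ring
  -- combine
  have htot : (nGammaT (u - Ih u)) ^ 2
      + ν * ∑ K ∈ mesh, (nGrad K (u - Ih u)) ^ 2
      + ∑ K ∈ mesh, (hK K ^ 2 / (c₁ * aK K * hK K + c₂ * ν))
          * (nM K (u - Ih u)) ^ 2
      ≤ S * (h ^ (2*k) * semΩ ^ 2) := by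
    rw [hS]; nlinarith [hGT2, hgradsum, hMsum]
  have hRHS : S * (h ^ (2*k) * semΩ ^ 2) = (Real.sqrt S * h ^ k * semΩ) ^ 2 := by
    rw [mul_pow, mul_pow, Real.sq_sqrt hSpos.le, ← pow_mul, Nat.mul_comm]; ring
  calc Real.sqrt _ ≤ Real.sqrt ((Real.sqrt S * h ^ k * semΩ) ^ 2) := by
        apply Real.sqrt_le_sqrt; rw [← hRHS]; exact htot
    _ = Real.sqrt S * h ^ k * semΩ := Real.sqrt_sq (by positivity)
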